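/- Let L > 0 and let γ = (x, y) : ℝ → ℝ² be a C², L-periodic, unit-speed curve with unit normal n(s) = J(γ'(s)) where J(a,b) = (−b,a), and signed curvature κ(s) = ⟨γ''(s), n(s)⟩. Assume κ(s) + ⟨γ(s), n(s)⟩ = 0 for all s, and ∫₀^L κ(s) ds = 2π. Then the enclosed (oriented) area equals π, i.e. (1/2)∫₀^L (x(s)·y'(s) − y(s)·x'(s)) ds = π. -/

import Mathlib

open Real
open scoped InnerProductSpace

/-- Rotation by `π/2` in the Euclidean plane: `J(a, b) = (-b, a)`. -/
noncomputable def Jrot (v : EuclideanSpace ℝ (Fin 2)) : EuclideanSpace ℝ (Fin 2) :=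
  WithLp.toLp 2 ![-(v 1), v 0]

/-- A closed unit-speed plane curve of rotation index `+1` satisfying the
contracting self-similar equation `κ + ⟨γ, n⟩ = 0` encloses (oriented) area `π`:
`(1/2)∫₀^L (x y' − y x') ds = π`. -/
theorem contracting_self_similar_area_pi
    (L : ℝ) (hL : 0 < L)
    (γ : ℝ → EuclideanSpace ℝ (Fin 2))
    (hγ : ContDiff ℝ 2 γ)
    (hper : ∀ s : ℝ, γ (s + L) = γ s)
    (hunit : ∀ s : ℝ, ‖deriv γ s‖ = 1)
    (n : ℝ → EuclideanSpace ℝ (Fin 2))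
    (hn : ∀ s : ℝ, n s = Jrot (deriv γ s))
    (κ : ℝ → ℝ)
    (hκ : ∀ s : ℝ, κ s = ⟪deriv (deriv γ) s, n s⟫_ℝ)
    (heq : ∀ s : ℝ, κ s + ⟪γ s, n s⟫_ℝ = 0)
    (hindex : ∫ s in (0:ℝ)..L, κ s = 2 * π) :
    (1 / 2) * ∫ s in (0:ℝ)..L, (γ s 0 * deriv γ s 1 - γ s 1 * deriv γ s 0) = π := by
  have key : ∀ s : ℝ, γ s 0 * deriv γ s 1 - γ s 1 * deriv γ s 0 = κ s := by
    intro s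
    have h := heq s
    rw [hn] at h
    simp only [Jrot, PiLp.inner_apply, RCLike.inner_apply, conj_trivial, WithLp.ofLp_toLp,
      Fin.sum_univ_two, Matrix.cons_val_zero, Matrix.cons_val_one, Matrix.head_cons] at h
    linarith
  rw [intervalIntegral.integral_congr (fun s _ => key s), hindex]
  ring
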